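/- Let $h \in (0,1)$ with $h \le 1/2$. Define $u_h:[0,1]\to\mathbb{R}$ to be the continuous piecewise linear function with $u_h(0)=1$, $u_h(1-h)=1$, $u_h(1)=0$ (linear on $[0,1-h]$ and on $[1-h,1]$). Then for every continuous piecewise linear $v:[0,1]\to\mathbb{R}$ on the same mesh with $v(0)=1$ and $v(1)=0$, one has $\int_0^1 |1-u_h(x)|\,dx \le \int_0^1 |1-v(x)|\,dx$. -/

import Mathlib

open MeasureTheory

/-- Continuous piecewise linear function on the two-element mesh `{(0,1-h),(1-h,1)}`
with nodal values `a` at `0`, `b` at `1-h`, `c` at `1`. -/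
noncomputable def pl2 (h a b c : ℝ) (x : ℝ) : ℝ :=
  if x ≤ 1 - h then a + (b - a) * x / (1 - h)
  else b + (c - b) * (x - (1 - h)) / h

lemma pl2_split (h : ℝ) (hh0 : 0 < h) (hh1 : h < 1) (b : ℝ) :
    ∫ x in (0:ℝ)..1, |1 - pl2 h 1 b 0 x| =
      (∫ x in (0:ℝ)..(1-h), |(1-b)/(1-h) * x|) +
        ∫ x in ((1:ℝ)-h)..1, |(1-b) + b/h * (x-(1-h))| := by
  have ht0 : (0:ℝ) < 1 - h := by linarith
  have htne : (1:ℝ) - h ≠ 0 := ne_of_gt ht0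
  have hne : h ≠ 0 := ne_of_gt hh0
  have e1 : Set.EqOn (fun x => |1 - pl2 h 1 b 0 x|) (fun x => |(1-b)/(1-h) * x|)
      (Set.uIcc 0 (1-h)) := by
    intro x hx
    rw [Set.uIcc_of_le (le_of_lt ht0)] at hx
    have hx2 : x ≤ 1 - h := hx.2
    simp only [pl2, if_pos hx2]
    congr 1
    field_simp
    ring
  have e2 : Set.EqOn (fun x => |1 - pl2 h 1 b 0 x|) (fun x => |(1-b) + b/h * (x-(1-h))|)
      (Set.uIcc (1-h) 1) := by
    intro x hx
    rw [Set.uIcc_of_le (by linarith : (1:ℝ)-h ≤ 1)] at hx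
    simp only [pl2]
    split_ifs with hxle
    · have hxeq : x = 1 - h := le_antisymm hxle hx.1
      subst hxeq
      congr 1
      field_simp
      ring
    · congr 1
      field_simp
      ring
  have c1 : Continuous fun x : ℝ => |(1-b)/(1-h) * x| := by continuity
  have c2 : Continuous fun x : ℝ => |(1-b) + b/h * (x-(1-h))| := by continuity
  have i1 : IntervalIntegrable (fun x => |1 - pl2 h 1 b 0 x|) volume 0 (1-h) := by
    apply (c1.intervalIntegrable 0 (1-h)).congr
    exact fun x hx => (e1 (Set.uIoc_subset_uIcc hx)).symm
  have i2 : IntervalIntegrable (fun x => |1 - pl2 h 1 b 0 x|) volume (1-h) 1 := by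
    apply (c2.intervalIntegrable (1-h) 1).congr
    exact fun x hx => (e2 (Set.uIoc_subset_uIcc hx)).symm
  rw [← intervalIntegral.integral_add_adjacent_intervals i1 i2,
    intervalIntegral.integral_congr e1, intervalIntegral.integral_congr e2]

lemma lin_int (c d a b' : ℝ) : ∫ x in a..b', (c * x + d) = c*(b'^2 - a^2)/2 + d*(b'-a) := by
  have h1 : IntervalIntegrable (fun x : ℝ => c * x) volume a b' :=
    (continuous_const.mul continuous_id').intervalIntegrable _ _
  rw [intervalIntegral.integral_add h1 intervalIntegrable_const,
    intervalIntegral.integral_const_mul, integral_id, intervalIntegral.integral_const]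
  simp [smul_eq_mul]; ring

theorem stmt0 (h : ℝ) (hh0 : 0 < h) (hh1 : h < 1) (hhalf : h ≤ 1 / 2) :
    ∀ β : ℝ,
      (∫ x in (0:ℝ)..1, |1 - pl2 h 1 1 0 x|) ≤ ∫ x in (0:ℝ)..1, |1 - pl2 h 1 β 0 x| := by
  intro β
  have ht0 : (0:ℝ) < 1 - h := by linarith
  have hne : h ≠ 0 := ne_of_gt hh0
  rw [pl2_split h hh0 hh1 1, pl2_split h hh0 hh1 β]
  -- LHS computation
  have L1 : (∫ x in (0:ℝ)..(1-h), |(1-1)/(1-h) * x|) = 0 := by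
    simp
  have L2e : Set.EqOn (fun x : ℝ => |(1-1) + 1/h * (x-(1-h))|)
      (fun x : ℝ => 1/h * x + (-(1/h * (1-h)))) (Set.uIcc (1-h) 1) := by
    intro x hx
    rw [Set.uIcc_of_le (by linarith : (1:ℝ)-h ≤ 1)] at hx
    have : (0:ℝ) ≤ (1-1) + 1/h * (x-(1-h)) := by
      have : 0 ≤ x - (1-h) := by linarith [hx.1]
      positivity
    simp only
    rw [abs_of_nonneg this]
    ring
  have L2 : (∫ x in ((1:ℝ)-h)..1, |(1-1) + 1/h * (x-(1-h))|) = h/2 := by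
    rw [intervalIntegral.integral_congr L2e]
    rw [lin_int]
    field_simp
    ring
  rw [L1, L2, zero_add]
  -- RHS lower bounds
  have R1 : |(1-β)*(1-h)/2| ≤ ∫ x in (0:ℝ)..(1-h), |(1-β)/(1-h) * x| := by
    have := intervalIntegral.abs_integral_le_integral_abs (μ := volume)
      (f := fun x : ℝ => (1-β)/(1-h) * x) (a := 0) (b := 1-h) (le_of_lt ht0)
    have hval : (∫ x in (0:ℝ)..(1-h), (1-β)/(1-h) * x) = (1-β)*(1-h)/2 := by
      rw [intervalIntegral.integral_const_mul, integral_id]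
      field_simp
      ring
    rwa [hval] at this
  have R2 : |(1-β)*h + β*h/2| ≤ ∫ x in ((1:ℝ)-h)..1, |(1-β) + β/h * (x-(1-h))| := by
    have := intervalIntegral.abs_integral_le_integral_abs (μ := volume)
      (f := fun x : ℝ => (1-β) + β/h * (x-(1-h))) (a := 1-h) (b := 1)
      (by linarith : (1:ℝ)-h ≤ 1)
    have hval : (∫ x in ((1:ℝ)-h)..1, ((1-β) + β/h * (x-(1-h)))) = (1-β)*h + β*h/2 := by
      have e : Set.EqOn (fun x : ℝ => (1-β) + β/h * (x-(1-h)))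
          (fun x : ℝ => β/h * x + ((1-β) - β/h*(1-h))) (Set.uIcc (1-h) 1) := by
        intro x hx; simp only; ring
      rw [intervalIntegral.integral_congr e, lin_int]
      field_simp
      ring
    rwa [hval] at this
  have a1 : |(1-β)*(1-h)/2| ≥ (1-β)*(1-h)/2 := le_abs_self _
  have a2 : |(1-β)*(1-h)/2| ≥ -((1-β)*(1-h)/2) := neg_le_abs _
  have b1 : |(1-β)*h + β*h/2| ≥ (1-β)*h + β*h/2 := le_abs_self _
  have b2 : |(1-β)*h + β*h/2| ≥ -((1-β)*h + β*h/2) := neg_le_abs _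
  nlinarith [R1, R2, a1, a2, b1, b2]
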